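/- (Theorem 3.1(i)) Let α₁ ≤ ⋯ ≤ α_s be nondecreasing constants, let D₁(k,s) = max_{k ≤ m ≤ s} [ m·α_{s-m+k}/k + m·Σ_{j=k+1}^{m} (α_{s-m+j} - α_{s-m+j-1})/j ], and let α ∈ (0,1). Suppose each p-value satisfies P(p̂ᵢ ≤ u) ≤ u for u ∈ (0,1) whenever hypothesis i is true. Then the stepup procedure with critical values α·αᵢ/D₁(k,s) satisfies k-FWER ≤ α, for every joint distribution of the p-values. -/

import Mathlib

open MeasureTheory Finset
open scoped Classical

noncomputable def orderStat {n : ℕ} (p : Fin n → ℝ) (k : ℕ) : ℝ :=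
  if h : k - 1 < n then p (Tuple.sort p ⟨k - 1, h⟩) else 0

noncomputable def numReject {n : ℕ} (c : ℕ → ℝ) (p : Fin n → ℝ) : ℕ :=
  ((Finset.Icc 1 n).filter (fun j => orderStat p j ≤ c j)).sup id

noncomputable def rejectedSet {n : ℕ} (c : ℕ → ℝ) (p : Fin n → ℝ) : Finset (Fin n) :=
  (Finset.univ.filter (fun j : Fin n => (j : ℕ) + 1 ≤ numReject c p)).image (Tuple.sort p)

noncomputable def trueOrderStat {n : ℕ} (I : Finset (Fin n)) (p : Fin n → ℝ) (k : ℕ) : ℝ :=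
  orderStat (fun j : Fin I.card => p (I.orderIsoOfFin rfl j).1) k

noncomputable def S1val (c : ℕ → ℝ) (k s m : ℕ) : ℝ :=
  m * c (s - m + k) / k + m * ∑ j ∈ Finset.Icc (k + 1) m, (c (s - m + j) - c (s - m + j - 1)) / j

section Aux

lemma tele (G : ℕ) (hG : 1 ≤ G) : ∀ T, G ≤ T →
    ∑ g ∈ Icc G (T-1), (1/(g:ℝ) - 1/((g:ℝ)+1)) = 1/(G:ℝ) - 1/(T:ℝ) := by
  intro T hT
  induction T, hT using Nat.le_induction with
  | base => simp [show G - 1 < G by omega, Finset.Icc_eq_empty_of_lt]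
  | succ T hGT ih =>
    have e1 : ∑ g ∈ Icc G ((T+1)-1), (1/(g:ℝ) - 1/((g:ℝ)+1))
        = ∑ g ∈ Icc G (T-1), (1/(g:ℝ) - 1/((g:ℝ)+1)) + (1/(T:ℝ) - 1/((T:ℝ)+1)) := by
      have h2 := Finset.sum_Icc_succ_top (show G ≤ (T-1)+1 by omega)
        (fun g => (1/(g:ℝ) - 1/((g:ℝ)+1)))
      rw [show (T-1)+1 = T by omega] at h2
      simpa using h2
    rw [e1, ih]
    push_cast
    ring

lemma abel_id (b : ℕ → ℝ) (k : ℕ) (hk : 1 ≤ k) : ∀ T, k ≤ T →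
    ∑ g ∈ Icc k (T-1), b g * (1/(g:ℝ) - 1/((g:ℝ)+1)) + b T / (T:ℝ)
      = b k / (k:ℝ) + ∑ g ∈ Icc (k+1) T, (b g - b (g-1)) / (g:ℝ) := by
  intro T hT
  induction T, hT using Nat.le_induction with
  | base =>
    simp [show k - 1 < k by omega, Finset.Icc_eq_empty_of_lt, show k < k + 1 by omega]
  | succ T hkT ih =>
    have e1 : ∑ g ∈ Icc k ((T+1)-1), b g * (1/(g:ℝ) - 1/((g:ℝ)+1))
        = ∑ g ∈ Icc k (T-1), b g * (1/(g:ℝ) - 1/((g:ℝ)+1))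
          + b T * (1/(T:ℝ) - 1/((T:ℝ)+1)) := by
      have h2 := Finset.sum_Icc_succ_top (show k ≤ (T-1)+1 by omega)
        (fun g => b g * (1/(g:ℝ) - 1/((g:ℝ)+1)))
      rw [show (T-1)+1 = T by omega] at h2
      simpa using h2
    have e2 : ∑ g ∈ Icc (k+1) (T+1), (b g - b (g-1)) / (g:ℝ)
        = ∑ g ∈ Icc (k+1) T, (b g - b (g-1)) / (g:ℝ)
          + (b (T+1) - b (T+1-1)) / ((T+1:ℕ):ℝ) := by
      exact Finset.sum_Icc_succ_top (show k+1 ≤ T+1 by omega) _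
    have hT0 : (T:ℝ) ≠ 0 := by
      have : 1 ≤ T := le_trans hk hkT
      positivity
    have hT1 : (T:ℝ)+1 ≠ 0 := by positivity
    have h3 : b T * (1/(T:ℝ) - 1/((T:ℝ)+1)) - b T/(T:ℝ) + b (T+1)/((T:ℝ)+1)
        = (b (T+1) - b T)/((T:ℝ)+1) := by
      field_simp
      ring
    rw [e1, e2, show T+1-1 = T by omega]
    push_cast
    linarith [ih, h3]

lemma prob_bound {Ω : Type*} [MeasurableSpace Ω] (μ : Measure Ω) [IsProbabilityMeasure μ]
    (f : Ω → ℝ) (hf : ∀ u ∈ Set.Ioo (0:ℝ) 1, μ {ω | f ω ≤ u} ≤ ENNReal.ofReal u)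
    (u : ℝ) (hu : 0 ≤ u) : (μ {ω | f ω ≤ u}).toReal ≤ u := by
  rcases lt_or_ge u 1 with h1 | h1
  · rcases eq_or_lt_of_le hu with rfl | h0
    · have h2 : μ {ω | f ω ≤ 0} = 0 := by
        by_contra h
        obtain ⟨ε, hε0, hε⟩ : ∃ ε : ℝ, 0 < ε ∧ ENNReal.ofReal ε < μ {ω | f ω ≤ 0} := by
          rcases lt_or_ge (μ {ω | f ω ≤ 0}) 1 with hlt | hge
          · have htp := ENNReal.toReal_pos h (measure_ne_top _ _)
            refine ⟨(μ {ω | f ω ≤ 0}).toReal/2, by positivity, ?_⟩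
            rw [ENNReal.ofReal_lt_iff_lt_toReal (by positivity) (measure_ne_top _ _)]
            linarith
          · exact ⟨1/2, by norm_num, lt_of_lt_of_le (by simp) hge⟩
        have hε1 : min ε (1/2) ∈ Set.Ioo (0:ℝ) 1 := by
          constructor
          · positivity
          · have := min_le_right ε (1/2); linarith
        have hh := hf _ hε1
        have hsub : μ {ω | f ω ≤ 0} ≤ μ {ω | f ω ≤ min ε (1/2)} :=
          measure_mono (fun ω hω => le_trans hω (le_of_lt hε1.1))
        have hle : μ {ω | f ω ≤ 0} ≤ ENNReal.ofReal (min ε (1/2)) := le_trans hsub hh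
        have hlt : ENNReal.ofReal (min ε (1/2)) ≤ ENNReal.ofReal ε :=
          ENNReal.ofReal_le_ofReal (min_le_left _ _)
        exact absurd (le_trans hle hlt) (not_le.mpr hε)
      simp [h2]
    · exact ENNReal.toReal_le_of_le_ofReal hu (hf u ⟨h0, h1⟩)
  · calc (μ {ω | f ω ≤ u}).toReal ≤ (μ Set.univ).toReal :=
          ENNReal.toReal_mono (measure_ne_top _ _) (measure_mono (Set.subset_univ _))
      _ = 1 := by simp
      _ ≤ u := h1

lemma card_filter_val_succ_le (r s : ℕ) (h : r ≤ s) :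
    (Finset.univ.filter (fun j : Fin s => (j:ℕ)+1 ≤ r)).card = r := by
  rcases Nat.eq_zero_or_pos r with rfl|hr
  · simp
  · have h2 : (Finset.univ.filter (fun j : Fin s => (j:ℕ)+1 ≤ r))
        = Finset.Iic (⟨r-1, by omega⟩ : Fin s) := by
      ext j; simp [Fin.le_def]; omega
    rw [h2, Fin.card_Iic]; simp; omega

lemma det_lemma {s : ℕ} (c' : ℕ → ℝ) (hc' : ∀ i j, 1 ≤ i → i ≤ j → j ≤ s → c' i ≤ c' j)
    (P : Fin s → ℝ) (I : Finset (Fin s)) {k : ℕ} (hk : 1 ≤ k)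
    (h : k ≤ (rejectedSet c' P ∩ I).card) :
    ∃ g, k ≤ g ∧ g ≤ I.card ∧ g ≤ (I.filter (fun i => P i ≤ c' (s - I.card + g))).card := by
  set r := numReject c' P with hr
  set g := (rejectedSet c' P ∩ I).card with hg
  have hgI : g ≤ I.card := Finset.card_le_card (Finset.inter_subset_right)
  have hrs : r ≤ s := by
    apply Finset.sup_le
    intro j hj
    simp only [Finset.mem_filter, Finset.mem_Icc] at hj
    exact hj.1.2
  have hg1 : 1 ≤ g := le_trans hk h
  have hrej_ne : (rejectedSet c' P ∩ I).Nonempty := Finset.card_pos.mp hg1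
  have hr1 : 1 ≤ r := by
    by_contra hcon
    push_neg at hcon
    interval_cases r
    · obtain ⟨i, hi⟩ := hrej_ne
      have := Finset.mem_inter.mp hi |>.1
      simp only [rejectedSet, Finset.mem_image, Finset.mem_filter] at this
      obtain ⟨j, ⟨_, hj⟩, _⟩ := this
      rw [← hr] at hj
      omega
  have hs1 : 1 ≤ s := le_trans hr1 hrs
  have hfilt_ne : ((Finset.Icc 1 s).filter (fun j => orderStat P j ≤ c' j)).Nonempty := by
    by_contra hcon
    rw [Finset.not_nonempty_iff_eq_empty] at hcon
    have : r = 0 := by rw [hr, numReject, hcon]; simp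
    omega
  obtain ⟨b, hb, hbe⟩ := Finset.exists_mem_eq_sup _ hfilt_ne id
  have hrb : r = b := hbe
  have hrmem : orderStat P r ≤ c' r := by
    rw [hrb]; exact (Finset.mem_filter.mp hb).2
  have hcard : (rejectedSet c' P).card = r := by
    rw [rejectedSet, Finset.card_image_of_injective _ (Equiv.injective _)]
    exact card_filter_val_succ_le r s hrs
  have hsplit : (rejectedSet c' P ∩ I).card + (rejectedSet c' P \ I).card
      = (rejectedSet c' P).card := Finset.card_inter_add_card_sdiff _ _
  have hsd : (rejectedSet c' P \ I).card ≤ s - I.card := by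
    have h1 : rejectedSet c' P \ I ⊆ Iᶜ := by
      intro i hi
      simp only [Finset.mem_sdiff] at hi
      simp [hi.2]
    have := Finset.card_le_card h1
    rwa [Finset.card_compl, Fintype.card_fin] at this
  have hrle : r ≤ s - I.card + g := by omega
  have hmem : ∀ i ∈ rejectedSet c' P, P i ≤ orderStat P r := by
    intro i hi
    simp only [rejectedSet, Finset.mem_image, Finset.mem_filter] at hi
    obtain ⟨j, ⟨_, hj⟩, hij⟩ := hi
    rw [← hr] at hj
    have hrlt : r - 1 < s := by omega
    rw [orderStat, dif_pos hrlt]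
    have := Tuple.monotone_sort P (a := j) (b := ⟨r-1, hrlt⟩)
      (by rw [Fin.le_def]; simp; omega)
    simpa [hij] using this
  refine ⟨g, h, hgI, ?_⟩
  have hsub : rejectedSet c' P ∩ I ⊆ I.filter (fun i => P i ≤ c' (s - I.card + g)) := by
    intro i hi
    rw [Finset.mem_inter] at hi
    rw [Finset.mem_filter]
    refine ⟨hi.2, ?_⟩
    calc P i ≤ orderStat P r := hmem i hi.1
      _ ≤ c' r := hrmem
      _ ≤ c' (s - I.card + g) := hc' r _ hr1 hrle (by omega)
  calc g ≤ (rejectedSet c' P ∩ I).card := le_refl _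
    _ ≤ _ := Finset.card_le_card hsub

end Aux

theorem stmt8 {Ω : Type*} [MeasurableSpace Ω] (μ : Measure Ω) [IsProbabilityMeasure μ]
    {s k : ℕ} (hk1 : 1 ≤ k) (hks : k ≤ s)
    (c : ℕ → ℝ) (hc : ∀ i j, 1 ≤ i → i ≤ j → j ≤ s → c i ≤ c j) (hc0 : 0 ≤ c 1)
    (α : ℝ) (hα : α ∈ Set.Ioo (0 : ℝ) 1)
    (p : Fin s → Ω → ℝ) (hmeas : ∀ i, Measurable (p i))
    (I : Finset (Fin s))
    (hp : ∀ i ∈ I, ∀ u ∈ Set.Ioo (0 : ℝ) 1, μ {ω | p i ω ≤ u} ≤ ENNReal.ofReal u) :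
    (μ {ω | k ≤ (rejectedSet
        (fun i => α * c i / ((Finset.Icc k s).sup' (Finset.nonempty_Icc.mpr hks) (S1val c k s)))
        (fun i => p i ω) ∩ I).card}).toReal ≤ α := by
  obtain ⟨hα0, hα1⟩ := hα
  set D := (Finset.Icc k s).sup' (Finset.nonempty_Icc.mpr hks) (S1val c k s) with hD
  set cst : ℕ → ℝ := fun i => α * c i / D with hcst
  -- nonnegativity of c on [1,s]
  have hcnn : ∀ i, 1 ≤ i → i ≤ s → 0 ≤ c i := fun i h1 h2 => le_trans hc0 (hc 1 i le_rfl h1 h2)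
  -- S1val nonneg on Icc k s
  have hS1nn : ∀ m, k ≤ m → m ≤ s → 0 ≤ S1val c k s m := by
    intro m hkm hms
    rw [S1val]
    have h1 : 0 ≤ (m:ℝ) * c (s - m + k) / k := by
      have := hcnn (s - m + k) (by omega) (by omega)
      positivity
    have h2 : 0 ≤ ∑ j ∈ Finset.Icc (k + 1) m, (c (s - m + j) - c (s - m + j - 1)) / (j:ℝ) := by
      apply Finset.sum_nonneg
      intro j hj
      rw [Finset.mem_Icc] at hj
      apply div_nonneg
      · have := hc (s - m + j - 1) (s - m + j) (by omega) (by omega) (by omega)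
        linarith
      · positivity
    positivity
  have hD0 : 0 ≤ D := le_trans (hS1nn s hks le_rfl)
    (Finset.le_sup' (S1val c k s) (Finset.mem_Icc.mpr ⟨hks, le_rfl⟩))
  -- cst monotone and nonneg on [1,s]
  have hcstmono : ∀ i j, 1 ≤ i → i ≤ j → j ≤ s → cst i ≤ cst j := by
    intro i j h1 h2 h3
    rcases eq_or_lt_of_le hD0 with hD0' | hD0'
    · simp [hcst, ← hD0']
    · simp only [hcst]
      rw [div_le_div_iff_of_pos_right hD0']
      exact mul_le_mul_of_nonneg_left (hc i j h1 h2 h3) hα0.le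
  have hcstnn : ∀ i, 1 ≤ i → i ≤ s → 0 ≤ cst i := by
    intro i h1 h2
    exact div_nonneg (mul_nonneg hα0.le (hcnn i h1 h2)) hD0
  by_cases hTk : I.card < k
  · have hempty : {ω | k ≤ (rejectedSet cst (fun i => p i ω) ∩ I).card} = ∅ := by
      ext ω
      simp only [Set.mem_setOf_eq, Set.mem_empty_iff_false, iff_false, not_le]
      exact lt_of_le_of_lt (Finset.card_le_card Finset.inter_subset_right) hTk
    rw [hempty]
    simp [hα0.le]
  push_neg at hTk
  have hTs : I.card ≤ s := by
    have := Finset.card_le_univ I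
    simpa using this
  set T := I.card with hT
  -- thresholds
  set β : ℕ → ℝ := fun g => cst (s - T + g) with hβ
  have hβmono : ∀ g g', k ≤ g → g ≤ g' → g' ≤ T → β g ≤ β g' := by
    intro g g' h1 h2 h3
    exact hcstmono _ _ (by omega) (by omega) (by omega)
  have hβnn : ∀ g, k ≤ g → g ≤ T → 0 ≤ β g := by
    intro g h1 h2
    exact hcstnn _ (by omega) (by omega)
  -- counting functions
  set N : ℕ → Ω → ℕ := fun g ω => (I.filter fun i => p i ω ≤ β g).card with hN
  have hNcast : ∀ g ω, ((N g ω : ℕ) : ℝ)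
      = ∑ i ∈ I, Set.indicator {ω' | p i ω' ≤ β g} (fun _ => (1:ℝ)) ω := by
    intro g ω
    rw [hN]
    simp only
    rw [Finset.card_filter]
    push_cast
    refine Finset.sum_congr rfl (fun i _ => ?_)
    by_cases hle : p i ω ≤ β g
    · simp [Set.indicator_apply, hle]
    · simp [Set.indicator_apply, hle]
  have hNmeas : ∀ g, Measurable (N g) := by
    intro g
    have : N g = fun ω => ∑ i ∈ I, if p i ω ≤ β g then 1 else 0 := by
      funext ω; rw [hN]; simp only; rw [Finset.card_filter]
    rw [this]
    exact Finset.measurable_sum I (fun i _ =>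
      Measurable.ite (measurableSet_le (hmeas i) measurable_const)
        measurable_const measurable_const)
  set A : ℕ → Set Ω := fun g => {ω | g ≤ N g ω} with hA
  have hAmeas : ∀ g, MeasurableSet (A g) := by
    intro g
    exact hNmeas g MeasurableSpace.measurableSet_top
  set U : Set Ω := ⋃ g ∈ Finset.Icc k T, A g with hU
  have hUmeas : MeasurableSet U := by
    rw [hU]
    exact MeasurableSet.biUnion (Set.to_countable _) (fun g _ => hAmeas g)
  -- event included in U
  have hEU : {ω | k ≤ (rejectedSet cst (fun i => p i ω) ∩ I).card} ⊆ U := by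
    intro ω hω
    obtain ⟨g, hg1, hg2, hg3⟩ := det_lemma cst hcstmono (fun i => p i ω) I hk1 hω
    rw [hU]
    refine Set.mem_biUnion (Finset.mem_Icc.mpr ⟨hg1, hg2⟩) ?_
    exact hg3
  -- integrability
  have hind_int : ∀ (i : Fin s) (u : ℝ),
      Integrable (Set.indicator {ω' | p i ω' ≤ u} (fun _ => (1:ℝ))) μ :=
    fun i u => (integrable_const 1).indicator (measurableSet_le (hmeas i) measurable_const)
  have hNr_int : ∀ g, Integrable (fun ω => ((N g ω : ℕ) : ℝ)) μ := by
    intro g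
    have : (fun ω => ((N g ω : ℕ) : ℝ))
        = fun ω => ∑ i ∈ I, Set.indicator {ω' | p i ω' ≤ β g} (fun _ => (1:ℝ)) ω := by
      funext ω; exact hNcast g ω
    rw [this]
    exact integrable_finset_sum I (fun i _ => hind_int i (β g))
  set f : Ω → ℝ := fun ω => ∑ g ∈ Icc k (T-1), ((N g ω : ℕ) : ℝ) * (1/(g:ℝ) - 1/((g:ℝ)+1))
      + ((N T ω : ℕ) : ℝ) / (T:ℝ) with hf
  have hf_int : Integrable f μ := by
    rw [hf]
    exact Integrable.add
      (integrable_finset_sum _ (fun g _ => (hNr_int g).mul_const _))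
      ((hNr_int T).div_const _)
  -- weights nonneg
  have hwnn : ∀ g : ℕ, 1 ≤ g → 0 ≤ 1/(g:ℝ) - 1/((g:ℝ)+1) := by
    intro g hg
    have hg0 : (0:ℝ) < (g:ℝ) := by positivity
    have : 1/((g:ℝ)+1) ≤ 1/(g:ℝ) := by
      apply one_div_le_one_div_of_le hg0
      linarith
    linarith
  have hfnn : ∀ ω, 0 ≤ f ω := by
    intro ω
    rw [hf]
    have h1 : 0 ≤ ∑ g ∈ Icc k (T-1), ((N g ω : ℕ) : ℝ) * (1/(g:ℝ) - 1/((g:ℝ)+1)) := by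
      apply Finset.sum_nonneg
      intro g hg
      rw [Finset.mem_Icc] at hg
      exact mul_nonneg (Nat.cast_nonneg _) (hwnn g (by omega))
    have h2 : (0:ℝ) ≤ ((N T ω : ℕ) : ℝ) / (T:ℝ) :=
      div_nonneg (Nat.cast_nonneg _) (Nat.cast_nonneg _)
    linarith
  -- indicator of U ≤ f
  have hindic_le : ∀ ω, Set.indicator U (fun _ => (1:ℝ)) ω ≤ f ω := by
    intro ω
    by_cases hωU : ω ∈ U
    · rw [Set.indicator_of_mem hωU]
      rw [hU] at hωU
      simp only [Set.mem_iUnion] at hωU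
      obtain ⟨G, hGmem, hGA⟩ := hωU
      rw [Finset.mem_Icc] at hGmem
      obtain ⟨hkG, hGT⟩ := hGmem
      have hGN : G ≤ N G ω := hGA
      have hG1 : 1 ≤ G := le_trans hk1 hkG
      have hT1 : 1 ≤ T := le_trans hk1 hTk
      have hNmono : ∀ g, G ≤ g → g ≤ T → (G:ℝ) ≤ ((N g ω : ℕ) : ℝ) := by
        intro g h1 h2
        have hsub : I.filter (fun i => p i ω ≤ β G) ⊆ I.filter (fun i => p i ω ≤ β g) := by
          intro i hi
          rw [Finset.mem_filter] at hi ⊢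
          exact ⟨hi.1, le_trans hi.2 (hβmono G g hkG h1 h2)⟩
        have hcc : N G ω ≤ N g ω := Finset.card_le_card hsub
        exact_mod_cast le_trans hGN hcc
      have hTpos : (0:ℝ) < (T:ℝ) := by positivity
      have hGpos : (0:ℝ) < (G:ℝ) := by positivity
      rw [hf]
      have h1 : ∑ g ∈ Icc G (T-1), ((N g ω : ℕ) : ℝ) * (1/(g:ℝ) - 1/((g:ℝ)+1))
          ≤ ∑ g ∈ Icc k (T-1), ((N g ω : ℕ) : ℝ) * (1/(g:ℝ) - 1/((g:ℝ)+1)) := by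
        apply Finset.sum_le_sum_of_subset_of_nonneg (Finset.Icc_subset_Icc_left hkG)
        intro g hg _
        rw [Finset.mem_Icc] at hg
        exact mul_nonneg (Nat.cast_nonneg _) (hwnn g (by omega))
      have h2 : ∑ g ∈ Icc G (T-1), (G:ℝ) * (1/(g:ℝ) - 1/((g:ℝ)+1))
          ≤ ∑ g ∈ Icc G (T-1), ((N g ω : ℕ) : ℝ) * (1/(g:ℝ) - 1/((g:ℝ)+1)) := by
        apply Finset.sum_le_sum
        intro g hg
        rw [Finset.mem_Icc] at hg
        exact mul_le_mul_of_nonneg_right (hNmono g hg.1 (by omega)) (hwnn g (by omega))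
      have h4 : ∑ g ∈ Icc G (T-1), (G:ℝ) * (1/(g:ℝ) - 1/((g:ℝ)+1))
          = (G:ℝ) * (1/(G:ℝ) - 1/(T:ℝ)) := by
        rw [← Finset.mul_sum, tele G hG1 T hGT]
      have h5 : (G:ℝ)/(T:ℝ) ≤ ((N T ω : ℕ) : ℝ) / (T:ℝ) := by
        rw [div_le_div_iff_of_pos_right hTpos]
        exact hNmono T hGT le_rfl
      have h6 : (G:ℝ) * (1/(G:ℝ) - 1/(T:ℝ)) + (G:ℝ)/(T:ℝ) = 1 := by
        have he : (G:ℝ) * (1/(G:ℝ) - 1/(T:ℝ)) + (G:ℝ)/(T:ℝ) = (G:ℝ)/(G:ℝ) := by ring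
        rw [he, div_self (ne_of_gt hGpos)]
      linarith
    · rw [Set.indicator_of_notMem hωU]
      exact hfnn ω
  -- integral of N
  have hTpos : (0:ℝ) < (T:ℝ) := by
    have : 1 ≤ T := le_trans hk1 hTk
    positivity
  have hint_eq : ∀ g, ∫ ω, ((N g ω : ℕ) : ℝ) ∂μ
      = ∑ i ∈ I, (μ {ω | p i ω ≤ β g}).toReal := by
    intro g
    rw [show (fun ω => ((N g ω : ℕ) : ℝ))
        = fun ω => ∑ i ∈ I, Set.indicator {ω' | p i ω' ≤ β g} (fun _ => (1:ℝ)) ω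
      from funext (hNcast g)]
    rw [integral_finset_sum _ (fun i _ => hind_int i (β g))]
    refine Finset.sum_congr rfl (fun i _ => ?_)
    exact integral_indicator_one (measurableSet_le (hmeas i) measurable_const)
  have hint_le : ∀ g, k ≤ g → g ≤ T → ∫ ω, ((N g ω : ℕ) : ℝ) ∂μ ≤ (T:ℝ) * β g := by
    intro g h1 h2
    rw [hint_eq g]
    calc ∑ i ∈ I, (μ {ω | p i ω ≤ β g}).toReal ≤ ∑ _i ∈ I, β g := by
          apply Finset.sum_le_sum
          intro i hi
          exact prob_bound μ (p i) (hp i hi) (β g) (hβnn g h1 h2)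
      _ = (T:ℝ) * β g := by
          rw [Finset.sum_const, nsmul_eq_mul, hT]
  -- compute the integral of f
  have hf_eq : ∫ ω, f ω ∂μ
      = ∑ g ∈ Icc k (T-1), (∫ ω, ((N g ω : ℕ) : ℝ) ∂μ) * (1/(g:ℝ) - 1/((g:ℝ)+1))
        + (∫ ω, ((N T ω : ℕ) : ℝ) ∂μ) / (T:ℝ) := by
    rw [hf]
    rw [integral_add (integrable_finset_sum _ (fun g _ => (hNr_int g).mul_const _))
      ((hNr_int T).div_const _)]
    rw [integral_finset_sum _ (fun g _ => (hNr_int g).mul_const _)]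
    rw [integral_div]
    congr 1
    refine Finset.sum_congr rfl (fun g _ => ?_)
    exact integral_mul_const _ _
  have hf_le : ∫ ω, f ω ∂μ
      ≤ ∑ g ∈ Icc k (T-1), ((T:ℝ) * β g) * (1/(g:ℝ) - 1/((g:ℝ)+1)) + ((T:ℝ) * β T) / (T:ℝ) := by
    rw [hf_eq]
    apply add_le_add
    · apply Finset.sum_le_sum
      intro g hg
      rw [Finset.mem_Icc] at hg
      exact mul_le_mul_of_nonneg_right (hint_le g hg.1 (by omega)) (hwnn g (by omega))
    · rw [div_le_div_iff_of_pos_right hTpos]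
      exact hint_le T hTk le_rfl
  have habel := abel_id (fun g => (T:ℝ) * β g) k hk1 T hTk
  -- final bound
  have hfinal : (T:ℝ) * β k / (k:ℝ)
      + ∑ g ∈ Icc (k+1) T, ((T:ℝ) * β g - (T:ℝ) * β (g-1)) / (g:ℝ) ≤ α := by
    rcases eq_or_lt_of_le hD0 with hDeq | hDpos
    · have hβ0' : ∀ g, β g = 0 := by
        intro g
        rw [hβ]
        simp only [hcst, ← hDeq, div_zero]
      simp only [hβ0', mul_zero, zero_div, sub_zero, zero_sub, neg_zero, Finset.sum_const_zero,
        add_zero]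
      exact hα0.le
    · have hSle : S1val c k s T ≤ D := by
        rw [hD]
        exact Finset.le_sup' (S1val c k s) (Finset.mem_Icc.mpr ⟨hTk, hTs⟩)
      have heq : (T:ℝ) * β k / (k:ℝ)
          + ∑ g ∈ Icc (k+1) T, ((T:ℝ) * β g - (T:ℝ) * β (g-1)) / (g:ℝ)
          = (α/D) * S1val c k s T := by
        rw [S1val, mul_add]
        congr 1
        · rw [hβ]
          simp only [hcst]
          ring
        · rw [Finset.mul_sum, Finset.mul_sum]
          refine Finset.sum_congr rfl (fun g hg => ?_)
          rw [Finset.mem_Icc] at hg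
          rw [hβ]
          simp only [hcst]
          rw [show s - T + (g-1) = s - T + g - 1 by omega]
          ring
      rw [heq]
      calc (α/D) * S1val c k s T ≤ (α/D) * D :=
            mul_le_mul_of_nonneg_left hSle (by positivity)
        _ = α := div_mul_cancel₀ α (ne_of_gt hDpos)
  -- chain everything
  calc (μ {ω | k ≤ (rejectedSet cst (fun i => p i ω) ∩ I).card}).toReal
      ≤ (μ U).toReal := ENNReal.toReal_mono (measure_ne_top μ U) (measure_mono hEU)
    _ = ∫ ω, Set.indicator U (fun _ => (1:ℝ)) ω ∂μ := by
        exact (integral_indicator_one hUmeas).symm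
    _ ≤ ∫ ω, f ω ∂μ :=
        integral_mono ((integrable_const 1).indicator hUmeas) hf_int hindic_le
    _ ≤ ∑ g ∈ Icc k (T-1), ((T:ℝ) * β g) * (1/(g:ℝ) - 1/((g:ℝ)+1)) + ((T:ℝ) * β T) / (T:ℝ) :=
        hf_le
    _ = (T:ℝ) * β k / (k:ℝ)
        + ∑ g ∈ Icc (k+1) T, ((T:ℝ) * β g - (T:ℝ) * β (g-1)) / (g:ℝ) := habel
    _ ≤ α := hfinal
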